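/- Let n ≥ 2, let B, B' ∈ 𝒩𝒮_n, and let α = (α_1,…,α_n) ∈ ℝ^{1×n} be such that the set {1, α_1, …, α_n} is linearly independent over ℚ; let α' ∈ ℝ^{1×n}. Let ℬ (resp. ℬ') be the (n+1)×n real matrix whose first n rows are B (resp. B') coerced to ℝ and whose last row is α (resp. α'). Suppose C is an (n+1)×(n+1) integer matrix with det C = ±1, Δ is an n×n real diagonal matrix with strictly positive diagonal entries, and P is an n×n permutation matrix, such that C·ℬ·Δ·P = ℬ'. Then, writing C in block form C = [[U, c],[r, t]] with U an n×n integer matrix, c an n×1 integer column, r a 1×n integer row, and t an integer: c = 0, det U = ±1, t = ±1, Δ = I_n, U·B·P = B', and α' = r·B·P + t·α·P; in particular α' − t·αP lies in the subgroup of ℝ^{1×n} generated by the rows of B'. -/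

import Mathlib

/-- An `n × n` integer matrix is weakly nonsingular if it has rank `n` and
every column is unimodular (the gcd of the entries of each column is `1`). -/
def WeaklyNonsingular {n : ℕ} (B : Matrix (Fin n) (Fin n) ℤ) : Prop :=
  B.rank = n ∧ ∀ j : Fin n, Finset.univ.gcd (fun i => B i j) = 1

/-- The permutation matrix `P` with `P (k, π k) = 1` and zeros elsewhere,
over a ring `R`. -/
def permMat (R : Type) [Zero R] [One R] {n : ℕ} (π : Equiv.Perm (Fin n)) :
    Matrix (Fin n) (Fin n) R :=
  Matrix.of fun i j => if π i = j then 1 else 0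

/-- The `(n+1) × n` real matrix whose first `n` rows are those of the integer
matrix `B` and whose last row is `α`. -/
def augMat {n : ℕ} (B : Matrix (Fin n) (Fin n) ℤ) (α : Fin n → ℝ) :
    Matrix (Fin (n + 1)) (Fin n) ℝ :=
  Matrix.of (Fin.snoc (fun i j => (B i j : ℝ)) α)

lemma aux_rank_det_ne_zero {n : ℕ} (A : Matrix (Fin n) (Fin n) ℤ)
    (h : A.rank = n) : A.det ≠ 0 := by
  intro hdet
  obtain ⟨v, hv, hAv⟩ := (Matrix.exists_mulVec_eq_zero_iff).mpr hdet
  set f := A.mulVecLin with hf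
  have hv' : v ∈ LinearMap.ker f := by simpa [f] using hAv
  have hnt : Nontrivial (LinearMap.ker f) :=
    ⟨⟨v, hv'⟩, 0, by simpa using hv⟩
  have h1 := rank_quotient_add_rank_of_isDomain (R := ℤ) (M := Fin n → ℤ) (LinearMap.ker f)
  have h2 : Module.rank ℤ ((Fin n → ℤ) ⧸ LinearMap.ker f) = Module.rank ℤ (LinearMap.range f) :=
    (f.quotKerEquivRange).rank_eq
  have h4 : Module.rank ℤ (Fin n → ℤ) = n := by simp [rank_fun']
  have h3 : Module.rank ℤ (LinearMap.range f) = n := by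
    have h6 := Module.finrank_eq_rank ℤ (LinearMap.range f)
    rw [Matrix.rank] at h
    rw [← h6, h]
  have h5 : 1 ≤ Module.rank ℤ (LinearMap.ker f) :=
    Cardinal.one_le_iff_pos.mpr (rank_pos (R := ℤ) (M := LinearMap.ker f))
  rw [h2, h3, h4] at h1
  have h7 : (n : Cardinal) + 1 ≤ (n : Cardinal) + Module.rank ℤ (LinearMap.ker f) :=
    add_le_add le_rfl h5
  rw [h1] at h7
  have : (n + 1 : ℕ) ≤ n := by exact_mod_cast h7
  omega

lemma aux_mul_permMat {R : Type} [CommRing R] {n m : ℕ} (π : Equiv.Perm (Fin n))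
    (X : Matrix (Fin m) (Fin n) R) (i : Fin m) (j : Fin n) :
    (X * permMat R π) i j = X i (π.symm j) := by
  rw [Matrix.mul_apply]
  simp only [permMat, Matrix.of_apply, mul_ite, mul_one, mul_zero]
  rw [Finset.sum_eq_single (π.symm j)]
  · simp
  · intro b _ hb
    rw [if_neg]
    intro hc
    exact hb (by rw [← hc]; simp)
  · simp

lemma aux_vecMul_permMat {R : Type} [CommRing R] {n : ℕ} (π : Equiv.Perm (Fin n))
    (x : Fin n → R) (j : Fin n) :
    Matrix.vecMul x (permMat R π) j = x (π.symm j) := by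
  rw [Matrix.vecMul, dotProduct]
  simp only [permMat, Matrix.of_apply, mul_ite, mul_one, mul_zero]
  rw [Finset.sum_eq_single (π.symm j)]
  · simp
  · intro b _ hb
    rw [if_neg]
    intro hc
    exact hb (by rw [← hc]; simp)
  · simp

lemma aux_indep_pair {n : ℕ} {α : Fin n → ℝ}
    (hα : LinearIndependent ℚ (Fin.cons (1 : ℝ) α : Fin (n + 1) → ℝ))
    (k : Fin n) (a b : ℤ) (h : (a : ℝ) + (b : ℝ) * α k = 0) : a = 0 ∧ b = 0 := by
  rw [Fintype.linearIndependent_iff] at hα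
  set f : Fin (n+1) → ℝ := Fin.cons (1:ℝ) α with hfdef
  set g : Fin (n+1) → ℚ := fun i => if i = 0 then (a : ℚ) else if i = k.succ then (b : ℚ) else 0
    with hg
  have hks : (k.succ : Fin (n+1)) ≠ 0 := Fin.succ_ne_zero k
  have hsum : ∑ i, g i • f i = 0 := by
    have hgsplit : ∀ i, g i • f i =
        (if i = 0 then (a:ℚ) • f i else 0) + (if i = k.succ then (b:ℚ) • f i else 0) := by
      intro i
      by_cases h0 : i = 0
      · subst h0; simp [g, hks.symm]
      · by_cases h1 : i = k.succ
        · subst h1; simp [g, hks]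
        · simp [g, h0, h1]
    rw [Finset.sum_congr rfl (fun i _ => hgsplit i), Finset.sum_add_distrib,
      Finset.sum_ite_eq' Finset.univ (0 : Fin (n+1)) (fun i => (a:ℚ) • f i),
      Finset.sum_ite_eq' Finset.univ (k.succ) (fun i => (b:ℚ) • f i)]
    simp only [Finset.mem_univ, if_true]
    have hf0 : f 0 = 1 := by simp [f]
    have hf1 : f k.succ = α k := by simp [f]
    rw [hf0, hf1, Rat.smul_def, Rat.smul_def]
    push_cast
    rw [mul_one]
    exact h
  have h0 := hα g hsum 0
  have h1 := hα g hsum k.succ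
  simp only [g, if_pos rfl] at h0
  simp only [g, if_neg hks, if_pos rfl] at h1
  exact ⟨by exact_mod_cast h0, by exact_mod_cast h1⟩

lemma aux_key_entry {n : ℕ} (B : Matrix (Fin n) (Fin n) ℤ) (α : Fin n → ℝ)
    (C : Matrix (Fin (n + 1)) (Fin (n + 1)) ℤ) (δ : Fin n → ℝ) (π : Equiv.Perm (Fin n))
    (i : Fin (n + 1)) (k : Fin n) :
    (C.map (Int.cast : ℤ → ℝ) * augMat B α * Matrix.diagonal δ * permMat ℝ π) i (π k)
      = ((∑ l : Fin n, (C i l.castSucc : ℝ) * B l k) + (C i (Fin.last n) : ℝ) * α k) * δ k := by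
  rw [aux_mul_permMat, Equiv.symm_apply_apply, Matrix.mul_diagonal, Matrix.mul_apply]
  congr 1
  rw [Fin.sum_univ_castSucc]
  simp [augMat, Matrix.map_apply]

theorem stmt16 {n : ℕ} (hn : 2 ≤ n) (B B' : Matrix (Fin n) (Fin n) ℤ)
    (hB : WeaklyNonsingular B) (hB' : WeaklyNonsingular B')
    (α α' : Fin n → ℝ)
    (hα : LinearIndependent ℚ (Fin.cons (1 : ℝ) α : Fin (n + 1) → ℝ))
    (C : Matrix (Fin (n + 1)) (Fin (n + 1)) ℤ) (hCdet : C.det = 1 ∨ C.det = -1)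
    (δ : Fin n → ℝ) (hδ : ∀ i, 0 < δ i) (π : Equiv.Perm (Fin n))
    (heq : C.map (Int.cast : ℤ → ℝ) * augMat B α * Matrix.diagonal δ * permMat ℝ π
        = augMat B' α')
    (U : Matrix (Fin n) (Fin n) ℤ) (hU : ∀ i j : Fin n, U i j = C i.castSucc j.castSucc)
    (c : Fin n → ℤ) (hc : ∀ i : Fin n, c i = C i.castSucc (Fin.last n))
    (rr : Fin n → ℤ) (hr : ∀ j : Fin n, rr j = C (Fin.last n) j.castSucc)
    (t : ℤ) (ht : t = C (Fin.last n) (Fin.last n)) :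
    c = 0 ∧
    (U.det = 1 ∨ U.det = -1) ∧
    (t = 1 ∨ t = -1) ∧
    Matrix.diagonal δ = 1 ∧
    U * B * permMat ℤ π = B' ∧
    (α' = fun j => ((Matrix.vecMul rr (B * permMat ℤ π)) j : ℝ)
        + (t : ℝ) * Matrix.vecMul α (permMat ℝ π) j) ∧
    (fun j => α' j - (t : ℝ) * Matrix.vecMul α (permMat ℝ π) j)
      ∈ AddSubgroup.closure (Set.range fun i : Fin n => fun j : Fin n => (B' i j : ℝ)) := by
  classical
  have hδ0 : ∀ k, δ k ≠ 0 := fun k => ne_of_gt (hδ k)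
  have hent : ∀ (i : Fin (n+1)) (k : Fin n),
      ((∑ l : Fin n, (C i l.castSucc : ℝ) * B l k) + (C i (Fin.last n) : ℝ) * α k) * δ k
        = augMat B' α' i (π k) := by
    intro i k
    rw [← aux_key_entry B α C δ π i k]
    exact congrFun (congrFun heq i) (π k)
  have key : ∀ (i k : Fin n),
      (((U * B) i k : ℝ) + (c i : ℝ) * α k) * δ k = (B' i (π k) : ℝ) := by
    intro i k
    have h := hent i.castSucc k
    rw [show augMat B' α' i.castSucc (π k) = ((B' i (π k) : ℤ) : ℝ) by
      simp [augMat]] at h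
    rw [← h]
    congr 2
    · rw [Matrix.mul_apply]
      push_cast
      exact Finset.sum_congr rfl fun l _ => by rw [hU]
    · rw [hc i]
  have keyl : ∀ k : Fin n,
      (((Matrix.vecMul rr B k : ℤ) : ℝ) + (t : ℝ) * α k) * δ k = α' (π k) := by
    intro k
    have h := hent (Fin.last n) k
    rw [show augMat B' α' (Fin.last n) (π k) = α' (π k) by simp [augMat]] at h
    rw [← h]
    congr 2
    · rw [Matrix.vecMul, dotProduct]
      push_cast
      exact Finset.sum_congr rfl fun l _ => by rw [hr]
    · rw [ht]
  -- c = 0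
  have hc0 : c = 0 := by
    by_contra hcne
    obtain ⟨i0, hi0⟩ : ∃ i, c i ≠ 0 := by
      by_contra hall
      push_neg at hall
      exact hcne (funext fun i => hall i)
    have hez : ∀ j : Fin n, B' i0 j ≠ 0 := by
      intro j hj
      have hk := key i0 (π.symm j)
      rw [Equiv.apply_symm_apply, hj] at hk
      push_cast at hk
      rcases mul_eq_zero.mp hk with h | h
      · exact hi0 (aux_indep_pair hα (π.symm j) _ _ h).2
      · exact hδ0 _ h
    have hcross : ∀ (i : Fin n) (j : Fin n), B' i0 j * c i = B' i j * c i0 := by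
      intro i j
      have h1 := key i (π.symm j)
      have h2 := key i0 (π.symm j)
      rw [Equiv.apply_symm_apply] at h1 h2
      set k := π.symm j
      have h3 : ((B' i0 j : ℝ)) * (((U*B) i k : ℝ) + (c i : ℝ) * α k)
          = (B' i j : ℝ) * (((U*B) i0 k : ℝ) + (c i0 : ℝ) * α k) := by
        apply mul_right_cancel₀ (hδ0 k)
        calc (B' i0 j : ℝ) * (((U*B) i k : ℝ) + (c i : ℝ) * α k) * δ k
            = (B' i0 j : ℝ) * ((((U*B) i k : ℝ) + (c i : ℝ) * α k) * δ k) := by ring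
          _ = (B' i0 j : ℝ) * (B' i j : ℝ) := by rw [h1]
          _ = (B' i j : ℝ) * ((((U*B) i0 k : ℝ) + (c i0 : ℝ) * α k) * δ k) := by rw [h2]; ring
          _ = (B' i j : ℝ) * (((U*B) i0 k : ℝ) + (c i0 : ℝ) * α k) * δ k := by ring
      have h4 : ((B' i0 j * (U*B) i k - B' i j * (U*B) i0 k : ℤ) : ℝ)
          + ((B' i0 j * c i - B' i j * c i0 : ℤ) : ℝ) * α k = 0 := by
        push_cast
        linear_combination h3
      have h5 := (aux_indep_pair hα k _ _ h4).2
      linarith [h5]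
    obtain ⟨j1, j2, hj12⟩ : ∃ j1 j2 : Fin n, j1 ≠ j2 :=
      ⟨⟨0, by omega⟩, ⟨1, by omega⟩, by simp [Fin.ext_iff]⟩
    have hprop : ∀ i, B' i0 j2 * B' i j1 = B' i0 j1 * B' i j2 := by
      intro i
      have h1 := hcross i j1
      have h2 := hcross i j2
      apply mul_right_cancel₀ hi0
      calc B' i0 j2 * B' i j1 * c i0 = B' i0 j2 * (B' i j1 * c i0) := by ring
        _ = B' i0 j2 * (B' i0 j1 * c i) := by rw [h1]
        _ = B' i0 j1 * (B' i0 j2 * c i) := by ring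
        _ = B' i0 j1 * (B' i j2 * c i0) := by rw [h2]
        _ = B' i0 j1 * B' i j2 * c i0 := by ring
    set v : Fin n → ℤ := Pi.single j1 (B' i0 j2) + Pi.single j2 (-(B' i0 j1)) with hv
    have hvne : v ≠ 0 := by
      intro h
      have h1 := congrFun h j1
      simp [v, Pi.single_apply, hj12, hj12.symm] at h1
      exact hez j2 h1
    have hmv : B'.mulVec v = 0 := by
      funext i
      rw [hv, Matrix.mulVec_add, Matrix.mulVec_single, Matrix.mulVec_single]
      simp only [Pi.add_apply, Pi.zero_apply, Pi.smul_apply, Matrix.col_apply, op_smul_eq_mul]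
      linear_combination hprop i
    have hdet0 : B'.det = 0 := Matrix.exists_mulVec_eq_zero_iff.mp ⟨v, hvne, hmv⟩
    exact aux_rank_det_ne_zero B' hB'.1 hdet0
  have hcf : ∀ i, c i = 0 := fun i => congrFun hc0 i
  have key2 : ∀ (i k : Fin n), (((U * B) i k : ℤ) : ℝ) * δ k = (B' i (π k) : ℝ) := by
    intro i k
    have h := key i k
    rw [hcf i] at h
    push_cast at h
    linarith [h]
  -- block determinant
  have hCsub : C.submatrix finSumFinEquiv finSumFinEquiv
      = Matrix.fromBlocks U 0 (Matrix.of fun (_ : Fin 1) j => rr j)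
          (Matrix.of fun (_ : Fin 1) (_ : Fin 1) => t) := by
    have hlast : ∀ k : Fin 1, finSumFinEquiv (Sum.inr k) = Fin.last n := by
      intro k
      have : (k : ℕ) = 0 := by omega
      apply Fin.ext
      simp [finSumFinEquiv, this]
    have hcs : ∀ i : Fin n, finSumFinEquiv (Sum.inl i) = Fin.castSucc i := by
      intro i
      apply Fin.ext
      simp [finSumFinEquiv]
    ext i j
    cases i with
    | inl i =>
      cases j with
      | inl j => simp [Matrix.submatrix_apply, hcs, hU i j]
      | inr j => simp [Matrix.submatrix_apply, hcs, hlast, ← hc i, hcf i]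
    | inr i =>
      cases j with
      | inl j => simp [Matrix.submatrix_apply, hcs, hlast, hr j]
      | inr j => simp [Matrix.submatrix_apply, hlast, ht]
  have hdetC : C.det = U.det * t := by
    rw [← Matrix.det_submatrix_equiv_self finSumFinEquiv C, hCsub,
      Matrix.det_fromBlocks_zero₁₂]
    congr 1
    rw [Matrix.det_fin_one]
    rfl
  have hUdetUnit : IsUnit U.det ∧ IsUnit t := by
    rcases hCdet with h | h <;> rw [hdetC] at h
    · exact ⟨IsUnit.of_mul_eq_one t h, IsUnit.of_mul_eq_one U.det (by linarith [h])⟩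
    · refine ⟨IsUnit.of_mul_eq_one (-t) (by linarith [h]),
        IsUnit.of_mul_eq_one (-U.det) (by linarith [h])⟩
  have hdetU : U.det = 1 ∨ U.det = -1 := Int.isUnit_iff.mp hUdetUnit.1
  have ht1 : t = 1 ∨ t = -1 := Int.isUnit_iff.mp hUdetUnit.2
  have hUinv : U⁻¹ * U = 1 := Matrix.nonsing_inv_mul U hUdetUnit.1
  have hBeq : B = U⁻¹ * (U * B) := by rw [← Matrix.mul_assoc, hUinv, Matrix.one_mul]
  -- δ = 1
  have hδ1 : ∀ k, δ k = 1 := by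
    intro k
    obtain ⟨i1, ha⟩ : ∃ i, B' i (π k) ≠ 0 := by
      by_contra hall
      push_neg at hall
      have h0 : Finset.univ.gcd (fun i => B' i (π k)) = 0 :=
        Finset.gcd_eq_zero_iff.mpr (fun i _ => hall i)
      rw [hB'.2 (π k)] at h0
      exact one_ne_zero h0
    set a := B' i1 (π k) with hadef
    set m0 := (U * B) i1 k with hm0def
    have hm0δ : (m0 : ℝ) * δ k = (a : ℝ) := key2 i1 k
    have hm0 : m0 ≠ 0 := by
      intro h
      have h2 : (a : ℝ) = 0 := by
        rw [← hm0δ, h]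
        push_cast
        ring
      exact ha (by exact_mod_cast h2)
    have hm0R : (m0 : ℝ) ≠ 0 := Int.cast_ne_zero.mpr hm0
    have hrel : ∀ i, (U*B) i k * a = B' i (π k) * m0 := by
      intro i
      have h1 := key2 i k
      have h2 : (((U*B) i k : ℤ) : ℝ) * (a : ℝ) = ((B' i (π k) : ℤ) : ℝ) * (m0 : ℝ) := by
        calc (((U*B) i k : ℤ) : ℝ) * (a : ℝ) = (((U*B) i k : ℤ) : ℝ) * ((m0:ℝ) * δ k) := by
              rw [hm0δ]
          _ = (m0 : ℝ) * ((((U*B) i k : ℤ):ℝ) * δ k) := by ring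
          _ = (m0 : ℝ) * (B' i (π k) : ℝ) := by rw [h1]
          _ = _ := by ring
      exact_mod_cast h2
    set G : ℕ := Int.gcd a m0 with hGdef
    have hGpos : 0 < G := Int.gcd_pos_of_ne_zero_right a hm0
    have hGne : (G : ℤ) ≠ 0 := by exact_mod_cast hGpos.ne'
    set p : ℤ := a / (G : ℤ) with hpdef
    set q : ℤ := m0 / (G : ℤ) with hqdef
    have hap : a = p * (G : ℤ) := (Int.ediv_mul_cancel (Int.gcd_dvd_left a m0)).symm
    have hqm : m0 = q * (G : ℤ) := (Int.ediv_mul_cancel (Int.gcd_dvd_right a m0)).symm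
    have hpqgcd : Int.gcd p q = 1 := Int.gcd_div_gcd_div_gcd hGpos
    have hpq : IsCoprime p q := Int.isCoprime_iff_gcd_eq_one.mpr hpqgcd
    have hrel2 : ∀ i, (U*B) i k * p = B' i (π k) * q := by
      intro i
      have h1 := hrel i
      rw [hap, hqm] at h1
      apply mul_right_cancel₀ hGne
      linear_combination h1
    have hpdvd : ∀ i, p ∣ B' i (π k) := by
      intro i
      refine hpq.dvd_of_dvd_mul_right ⟨(U*B) i k, ?_⟩
      rw [← hrel2 i]; ring
    have hpunit : IsUnit p := by
      apply isUnit_of_dvd_one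
      rw [← hB'.2 (π k)]
      exact Finset.dvd_gcd fun i _ => hpdvd i
    have hqdvdM : ∀ i, q ∣ (U*B) i k := by
      intro i
      refine hpq.symm.dvd_of_dvd_mul_right ⟨B' i (π k), ?_⟩
      rw [hrel2 i]; ring
    have hqdvdB : ∀ i, q ∣ B i k := by
      intro i
      have hBik : B i k = ∑ l, U⁻¹ i l * (U*B) l k := by
        conv_lhs => rw [hBeq]
        rw [Matrix.mul_apply]
      rw [hBik]
      exact Finset.dvd_sum fun l _ => (hqdvdM l).mul_left _
    have hqunit : IsUnit q := by
      apply isUnit_of_dvd_one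
      rw [← hB.2 k]
      exact Finset.dvd_gcd fun i _ => hqdvdB i
    have ham : a = m0 ∨ a = -m0 := by
      rcases Int.isUnit_iff.mp hpunit with hp1 | hp1 <;>
        rcases Int.isUnit_iff.mp hqunit with hq1 | hq1 <;>
          rw [hp1] at hap <;> rw [hq1] at hqm <;> omega
    rcases ham with ham | ham
    · apply mul_left_cancel₀ hm0R
      rw [mul_one, hm0δ, ham]
    · exfalso
      have : (m0 : ℝ) * δ k = (m0 : ℝ) * (-1) := by
        rw [hm0δ, ham]; push_cast; ring
      have hδk := mul_left_cancel₀ hm0R this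
      linarith [hδ k, hδk]
  have hdiag : Matrix.diagonal δ = 1 := by
    have : δ = fun _ => 1 := funext hδ1
    rw [this]
    exact Matrix.diagonal_one
  have hentB : ∀ (i k : Fin n), (U * B) i k = B' i (π k) := by
    intro i k
    have h := key2 i k
    rw [hδ1 k, mul_one] at h
    exact_mod_cast h
  have hUBP : U * B * permMat ℤ π = B' := by
    ext i j
    rw [aux_mul_permMat, hentB i (π.symm j), Equiv.apply_symm_apply]
  have hα'eq : α' = fun j => ((Matrix.vecMul rr (B * permMat ℤ π)) j : ℝ)
      + (t : ℝ) * Matrix.vecMul α (permMat ℝ π) j := by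
    funext j
    have h := keyl (π.symm j)
    rw [hδ1 (π.symm j), mul_one, Equiv.apply_symm_apply] at h
    rw [← h, aux_vecMul_permMat]
    congr 1
    have hbp : Matrix.vecMul rr (B * permMat ℤ π) j = Matrix.vecMul rr B (π.symm j) := by
      rw [← Matrix.vecMul_vecMul, aux_vecMul_permMat]
    rw [hbp]
  -- membership
  have hBP : B * permMat ℤ π = U⁻¹ * B' := by
    rw [← hUBP, ← Matrix.mul_assoc, ← Matrix.mul_assoc, hUinv, Matrix.one_mul]
  set s : Fin n → ℤ := Matrix.vecMul rr U⁻¹ with hs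
  have hsv : Matrix.vecMul rr (B * permMat ℤ π) = Matrix.vecMul s B' := by
    rw [hBP, ← Matrix.vecMul_vecMul]
  have hfun : (fun j => α' j - (t : ℝ) * Matrix.vecMul α (permMat ℝ π) j)
      = ∑ i : Fin n, (s i) • (fun j : Fin n => (B' i j : ℝ)) := by
    funext j
    rw [Finset.sum_apply]
    have h1 : α' j - (t : ℝ) * Matrix.vecMul α (permMat ℝ π) j
        = ((Matrix.vecMul rr (B * permMat ℤ π)) j : ℝ) := by
      rw [hα'eq]; ring
    rw [h1, hsv]
    rw [Matrix.vecMul, dotProduct]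
    push_cast
    exact Finset.sum_congr rfl fun i _ => by
      simp [zsmul_eq_mul]
  refine ⟨hc0, hdetU, ht1, hdiag, hUBP, hα'eq, ?_⟩
  rw [hfun]
  exact AddSubgroup.sum_mem _ fun i _ =>
    AddSubgroup.zsmul_mem _ (AddSubgroup.subset_closure (Set.mem_range_self i)) (s i)
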